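/- Let R be a ring, s an element of the center of R, and X a bounded chain complex of finitely generated projective R-modules such that for every q and every x ∈ H_q(X) there exists n with sⁿ·x = 0 (i.e., the localization of the homology of X at the powers of s vanishes). Then there exists an integer n ≥ 1 such that the chain map sⁿ·id_X is chain homotopic to zero. -/

import Mathlib

open CategoryTheory Limits

universe u

/-- Multiplication by a central element `s` on a module, as a linear map. -/
def centralSmul {R : Type u} [Ring R] (M : ModuleCat.{u} R) (s : R)
    (hs : ∀ r, s * r = r * s) : M ⟶ M := ModuleCat.ofHom
  { toFun := fun x => s • x
    map_add' := fun x y => smul_add s x y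
    map_smul' := fun r x => by
      show s • (r • x) = r • (s • x)
      rw [smul_smul, smul_smul, hs] }

/-- Multiplication by a central element `s` in each degree, as a chain map `s • id_X`. -/
def centralSmulChain {R : Type u} [Ring R] (X : ChainComplex (ModuleCat.{u} R) ℤ) (s : R)
    (hs : ∀ r, s * r = r * s) : X ⟶ X where
  f i := centralSmul (X.X i) s hs
  comm' i j _ := by
    ext x
    show (X.d i j).hom (s • x) = s • (X.d i j).hom x
    exact (X.d i j).hom.map_smul s x

theorem pow_central {R : Type u} [Ring R] {s : R} (hs : ∀ r, s * r = r * s) (n : ℕ) :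
    ∀ r, s ^ n * r = r * s ^ n :=
  fun r => Commute.pow_left (hs r) n

lemma uniform_torsion {R : Type u} [Ring R] {s : R} (hs : ∀ r, s * r = r * s)
    {M : Type u} [AddCommGroup M] [Module R M] (N : Submodule R M) (hfg : N.FG)
    (h : ∀ x ∈ N, ∃ n : ℕ, s ^ n • x = 0) : ∃ m : ℕ, ∀ x ∈ N, s ^ m • x = 0 := by
  obtain ⟨T, hT⟩ := hfg
  have hmem : ∀ t ∈ T, t ∈ N := fun t ht => hT ▸ Submodule.subset_span ht
  classical
  refine ⟨T.attach.sup fun t => (h t.1 (hmem t.1 t.2)).choose, ?_⟩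
  intro x hx
  rw [← hT] at hx
  induction hx using Submodule.span_induction with
  | mem t ht =>
      have hn := (h t (hmem t ht)).choose_spec
      set n := (h t (hmem t ht)).choose
      have hle : n ≤ T.attach.sup fun t => (h t.1 (hmem t.1 t.2)).choose :=
        Finset.le_sup (f := fun t => (h t.1 (hmem t.1 t.2)).choose) (Finset.mem_attach T ⟨t, ht⟩)
      obtain ⟨c, hc⟩ := Nat.exists_eq_add_of_le hle
      rw [hc, add_comm, pow_add, mul_smul, hn, smul_zero]
  | zero => rw [smul_zero]
  | add x y hx hy ihx ihy => rw [smul_add, ihx, ihy, add_zero]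
  | smul r x hx ih =>
      rw [smul_smul, Commute.pow_left (hs r) _, mul_smul, ih, smul_zero]

lemma cycle_torsion {R : Type u} [Ring R] (s : R)
    (X : ChainComplex (ModuleCat.{u} R) ℤ)
    (htors : ∀ (q : ℤ) (x : X.homology q), ∃ n : ℕ, s ^ n • x = 0)
    (q : ℤ) (z : X.X q) (hz : X.d q (q - 1) z = 0) :
    ∃ (n : ℕ) (w : X.X (q + 1)), X.d (q + 1) q w = s ^ n • z := by
  set S := X.sc' (q + 1) q (q - 1) with hS
  have hzg : S.g z = 0 := hz
  set ζ : LinearMap.ker S.g.hom := ⟨z, hzg⟩ with hζ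
  set c : S.moduleCatLeftHomologyData.H := S.moduleCatLeftHomologyData.π ζ with hc
  let e : X.homology q ≅ S.homology :=
    X.homologyIsoSc' (q + 1) q (q - 1) (ChainComplex.prev ℤ q) (ChainComplex.next ℤ q)
  let g : S.moduleCatLeftHomologyData.H ⟶ X.homology q := S.moduleCatHomologyIso.inv ≫ e.inv
  obtain ⟨n, hn⟩ := htors q (g c)
  have hginj : Function.Injective g := by
    have : Mono g := inferInstance
    exact (ModuleCat.mono_iff_injective g).mp this
  have hzero : s ^ n • c = 0 := by
    apply hginj
    rw [map_smul, hn, map_zero]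
  have : s ^ n • ζ ∈ LinearMap.range S.moduleCatToCycles := by
    have : (LinearMap.range S.moduleCatToCycles).mkQ (s ^ n • ζ) = 0 := by
      rw [map_smul]; exact hzero
    rwa [Submodule.mkQ_apply,
      Submodule.Quotient.mk_eq_zero] at this
  obtain ⟨x₁, hx₁⟩ := this
  refine ⟨n, x₁, ?_⟩
  have := congrArg Subtype.val hx₁
  exact this

lemma eq_zero_of_isZero {R : Type u} [Ring R] {M : ModuleCat.{u} R} (h : IsZero M) (x : M) :
    x = (0 : M) := by
  have h1 : (𝟙 M : M ⟶ M) = 0 := h.eq_of_src _ _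
  calc x = (𝟙 M : M ⟶ M) x := rfl
    _ = (0 : M ⟶ M) x := by rw [h1]
    _ = 0 := rfl

def castLM {R : Type u} [Ring R] {X : ChainComplex (ModuleCat.{u} R) ℤ} {i j i' j' : ℤ}
    (hi : i = i') (hj : j = j') (f : X.X i ⟶ X.X j) : X.X i' ⟶ X.X j' := hi ▸ hj ▸ f

/-- If `s` is central in `R` and `X` is a bounded chain complex of finitely
generated projective `R`-modules whose homology is killed by powers of `s` (i.e. the
localization of the homology at the powers of `s` vanishes), then some power `sⁿ·id_X`
(`n ≥ 1`) is chain homotopic to zero. -/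
theorem stmt14 {R : Type u} [Ring R] (s : R) (hs : ∀ r, s * r = r * s)
    (X : ChainComplex (ModuleCat.{u} R) ℤ)
    (hbdd : ∃ a b : ℤ, ∀ i, (i < a ∨ b < i) → IsZero (X.X i))
    (hfg : ∀ i, Module.Finite R (X.X i) ∧ Module.Projective R (X.X i))
    (htors : ∀ (q : ℤ) (x : X.homology q), ∃ n : ℕ, s ^ n • x = 0) :
    ∃ n : ℕ, 1 ≤ n ∧
      Nonempty (Homotopy (centralSmulChain X (s ^ n) (pow_central hs n)) 0) := by
  classical
  obtain ⟨a, b, hb⟩ := hbdd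
  have main : ∀ j : ℕ, ∃ N : ℕ, ∃ h : ∀ p q : ℤ, (X.X p ⟶ X.X q),
      (∀ p q : ℤ, q ≠ p + 1 → h p q = 0) ∧
      ∀ i : ℤ, i < a + (j : ℤ) → ∀ x : X.X i,
        X.d (i + 1) i (h i (i + 1) x) + h (i - 1) i (X.d i (i - 1) x) = s ^ N • x := by
    intro j
    induction j with
    | zero =>
      refine ⟨0, fun _ _ => 0, fun _ _ _ => rfl, ?_⟩
      intro i hi x
      have hx : x = 0 := eq_zero_of_isZero (hb i (Or.inl (by omega))) x
      subst hx
      simp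
    | succ j ih =>
      obtain ⟨N, h, hz0, heq⟩ := ih
      set k : ℤ := a + (j : ℤ) with hk
      haveI : Module.Finite R (X.X k) := (hfg k).1
      haveI : Module.Projective R (X.X k) := (hfg k).2
      set u : X.X k ⟶ X.X k :=
        centralSmul (X.X k) (s ^ N) (pow_central hs N) - (X.d k (k - 1) ≫ h (k - 1) k) with hudef
      have hu : ∀ x : X.X k, u x = s ^ N • x - h (k - 1) k (X.d k (k - 1) x) := fun x => by
        rw [hudef]; simp [centralSmul]
      have hcyc : ∀ x : X.X k, X.d k (k - 1) (u x) = 0 := by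
        intro x
        have h1 := heq (k - 1) (by omega) (X.d k (k - 1) x)
        rw [show k - 1 + 1 = k by omega] at h1
        have h2 : X.d (k - 1) (k - 1 - 1) (X.d k (k - 1) x) = 0 := by
          calc X.d (k - 1) (k - 1 - 1) (X.d k (k - 1) x)
              = (X.d k (k - 1) ≫ X.d (k - 1) (k - 1 - 1)) x := rfl
            _ = (0 : X.X k ⟶ X.X (k - 1 - 1)) x := by rw [X.d_comp_d]
            _ = 0 := rfl
        rw [h2, map_zero, add_zero] at h1
        rw [hu, map_sub, map_smul, h1, sub_self]
      set B : Submodule R (X.X k) := LinearMap.range (X.d (k + 1) k).hom with hB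
      set v : X.X k →ₗ[R] (X.X k ⧸ B) := B.mkQ.comp u.hom with hv
      have hvt : ∀ y ∈ LinearMap.range v, ∃ n : ℕ, s ^ n • y = 0 := by
        rintro y ⟨x, rfl⟩
        obtain ⟨n, w, hw⟩ := cycle_torsion s X htors k (u x) (hcyc x)
        refine ⟨n, ?_⟩
        have h3 : v x = B.mkQ (u x) := rfl
        rw [h3, ← map_smul, ← hw, Submodule.mkQ_apply, Submodule.Quotient.mk_eq_zero]
        exact ⟨w, rfl⟩
      have hfgr : (LinearMap.range v).FG := by
        rw [LinearMap.range_eq_map]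
        exact Submodule.FG.map v (Module.finite_def.mp (hfg k).1)
      obtain ⟨m, hm⟩ := uniform_torsion hs _ hfgr hvt
      have hmem : ∀ x : X.X k, s ^ m • u x ∈ B := by
        intro x
        have h4 : B.mkQ (s ^ m • u x) = 0 := by
          rw [map_smul]; exact hm (v x) ⟨x, rfl⟩
        rwa [Submodule.mkQ_apply, Submodule.Quotient.mk_eq_zero] at h4
      set w0 : X.X k ⟶ X.X k := u ≫ centralSmul (X.X k) (s ^ m) (pow_central hs m) with hw0
      obtain ⟨ℓ, hℓ⟩ := Module.projective_lifting_property
        (LinearMap.rangeRestrict (X.d (k + 1) k).hom)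
        (LinearMap.codRestrict B w0.hom hmem)
        (LinearMap.surjective_rangeRestrict _)
      have hd : ∀ x : X.X k, X.d (k + 1) k (ℓ x) = s ^ m • u x := by
        intro x
        have := congrArg Subtype.val (LinearMap.congr_fun hℓ x)
        exact this
      refine ⟨N + m, fun p q =>
        if hpq : p = k ∧ q = k + 1 then castLM hpq.1.symm hpq.2.symm (ModuleCat.ofHom ℓ)
        else h p q ≫ centralSmul (X.X q) (s ^ m) (pow_central hs m), ?_, ?_⟩
      · intro p q hq
        dsimp only
        rw [dif_neg (by rintro ⟨rfl, rfl⟩; exact hq rfl), hz0 p q hq, zero_comp]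
      · intro i hi x
        dsimp only
        have hi' : i ≤ k := by push_cast at hi; omega
        rcases lt_or_eq_of_le hi' with hlt | rfl
        · rw [dif_neg (by rintro ⟨rfl, -⟩; omega), dif_neg (by rintro ⟨-, rfl⟩; omega)]
          have h5 : ((h i (i + 1) ≫ centralSmul (X.X (i + 1)) (s ^ m) (pow_central hs m)) x)
              = s ^ m • h i (i + 1) x := rfl
          have h6 : ((h (i - 1) i ≫ centralSmul (X.X i) (s ^ m) (pow_central hs m))
              (X.d i (i - 1) x)) = s ^ m • h (i - 1) i (X.d i (i - 1) x) := rfl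
          rw [h5, h6, map_smul, ← smul_add, heq i (by omega) x, smul_smul, ← pow_add,
            Nat.add_comm m N]
        · rw [dif_pos ⟨rfl, rfl⟩, dif_neg (by rintro ⟨h7, -⟩; omega)]
          show X.d (k + 1) k (ℓ x) +
            s ^ m • h (k - 1) k (X.d k (k - 1) x) = s ^ (N + m) • x
          rw [hd x, hu x, smul_sub, sub_add_cancel, smul_smul, ← pow_add, Nat.add_comm m N]
  obtain ⟨N, h, hz0, heq⟩ := main ((b - a).toNat + 1)
  have hbig : ∀ i : ℤ, ¬(i < a + (((b - a).toNat + 1 : ℕ) : ℤ)) → IsZero (X.X i) := by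
    intro i hi
    apply hb
    right
    have := Int.self_le_toNat (b - a)
    push_cast at hi
    omega
  refine ⟨N + 1, Nat.le_add_left 1 N,
    ⟨{ hom := fun p q => h p q ≫ centralSmul (X.X q) s hs,
       zero := ?_, comm := ?_ }⟩⟩
  · intro p q hpq
    rw [hz0 p q (fun hqe => hpq (by rw [ComplexShape.down_Rel]; omega)), zero_comp]
  · intro i
    have r1 : (ComplexShape.down ℤ).Rel i (i - 1) := by rw [ComplexShape.down_Rel]; omega
    have r2 : (ComplexShape.down ℤ).Rel (i + 1) i := by rw [ComplexShape.down_Rel]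
    rw [dNext_eq _ r1, prevD_eq _ r2]
    ext x
    by_cases hib : i < a + (((b - a).toNat + 1 : ℕ) : ℤ)
    · simp only [ModuleCat.hom_add, ModuleCat.hom_comp, LinearMap.add_apply, LinearMap.comp_apply,
        HomologicalComplex.zero_f, ModuleCat.hom_zero, LinearMap.zero_apply]
      show s ^ (N + 1) • x =
        (s • h (i - 1) i (X.d i (i - 1) x) + X.d (i + 1) i (s • h i (i + 1) x)) + 0
      rw [add_zero, map_smul, ← smul_add, add_comm (h (i - 1) i (X.d i (i - 1) x)),
        heq i hib x, smul_smul, ← pow_succ']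
    · have h0 := eq_zero_of_isZero (hbig i hib)
      exact (h0 _).trans (h0 _).symm
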